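/- Let H ⊆ ℤ² be a good domain and let h = (t,n) ∈ H. If the set S = {h' ∈ H : h' ≤ h} has a unique minimal element (s,m), then S = {(t',n') ∈ ℤ² : s ≤ t' ≤ t and m ≤ n' ≤ n}, i.e. S is the full lattice rectangle with corners (s,m) and (t,n). -/

import Mathlib

/-- A nonempty `H ⊆ ℤ²` is a good domain if it is closed under the two unit forward
shifts and every down-set `{h' ∈ H : h' ≤ h}` (product order) is finite. -/
def GoodDomain (H : Set (ℤ × ℤ)) : Prop :=
  H.Nonempty ∧
    (∀ p ∈ H, (p.1 + 1, p.2) ∈ H ∧ (p.1, p.2 + 1) ∈ H) ∧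
    ∀ h ∈ H, {h' ∈ H | h' ≤ h}.Finite

lemma goodDomain_up (H : Set (ℤ × ℤ))
    (hshift : ∀ p ∈ H, (p.1 + 1, p.2) ∈ H ∧ (p.1, p.2 + 1) ∈ H)
    (p : ℤ × ℤ) (hp : p ∈ H) (q : ℤ × ℤ) (hpq : p ≤ q) : q ∈ H := by
  have key : ∀ a b : ℕ, ∀ p ∈ H, (p.1 + a, p.2 + b) ∈ H := by
    intro a
    induction a with
    | zero =>
      intro b
      induction b with
      | zero => intro p hp; simpa using hp
      | succ b ih =>
        intro p hp
        have := (hshift _ (ih p hp)).2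
        simpa [add_assoc] using this
    | succ a ih =>
      intro b p hp
      have := ih b _ (hshift p hp).1
      simp only at this
      convert this using 2 <;> push_cast <;> ring
  have h1 : p.1 ≤ q.1 := hpq.1
  have h2 : p.2 ≤ q.2 := hpq.2
  have := key (q.1 - p.1).toNat (q.2 - p.2).toNat p hp
  have e1 : p.1 + ((q.1 - p.1).toNat : ℤ) = q.1 := by omega
  have e2 : p.2 + ((q.2 - p.2).toNat : ℤ) = q.2 := by omega
  rw [e1, e2] at this
  simpa using this

/-- If the down-set `S = {h' ∈ H : h' ≤ h}` of `h ∈ H` in a good domain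
has a unique minimal element `m₀`, then `S` is the full lattice rectangle `[m₀, h]`. -/
theorem stmt7 (H : Set (ℤ × ℤ)) (hH : GoodDomain H) (h : ℤ × ℤ) (hh : h ∈ H)
    (m₀ : ℤ × ℤ) (hm₀H : m₀ ∈ H) (hm₀h : m₀ ≤ h)
    (hm₀min : ∀ h' ∈ H, h' ≤ m₀ → h' = m₀)
    (huniq : ∀ h' ∈ H, h' ≤ h → (∀ h'' ∈ H, h'' ≤ h' → h'' = h') → h' = m₀) :
    {h' ∈ H | h' ≤ h} = Set.Icc m₀ h := by
  obtain ⟨-, hshift, hfin⟩ := hH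
  ext x
  simp only [Set.mem_setOf_eq, Set.mem_Icc]
  constructor
  · rintro ⟨hxH, hxh⟩
    refine ⟨?_, hxh⟩
    obtain ⟨b, hbx, hbmin⟩ := (hfin x hxH).isPWO.exists_le_minimal
      (a := x) ⟨hxH, le_refl x⟩
    have hbH : b ∈ H := hbmin.1.1
    have hbm₀ : b = m₀ := by
      apply huniq b hbH (hbmin.1.2.trans hxh)
      intro c hcH hcb
      exact le_antisymm hcb (hbmin.2 ⟨hcH, hcb.trans hbmin.1.2⟩ hcb)
    exact hbm₀ ▸ hbx
  · rintro ⟨h1, h2⟩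
    exact ⟨goodDomain_up H hshift m₀ hm₀H x h1, h2⟩
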